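/- Let f be a tiling of ℤ² by the 11-tile Wang set 𝒯 = 𝒯₀ ∪ 𝒯₁. Then every row of f uses tiles of only one of 𝒯₀, 𝒯₁; define v : ℤ → {0,1} by v(y) = 1 if row y uses tiles of 𝒯₁ and v(y) = 0 otherwise. Then there exists a strictly increasing sequence (p_k)_{k∈ℤ} of integers with p_k → ±∞ (as k → ±∞) such that for every k, p_{k+1} − p_k ∈ {4,5}, v(p_k) = 1 and v(y) = 0 for all y with p_k < y < p_{k+1}; that is, v is a biinfinite concatenation of the blocks 1000 and 10000. -/

import Mathlib

structure WangTile (H V : Type*) where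
  west : H
  east : H
  south : V
  north : V
deriving DecidableEq

def TilingOn {H V : Type*} (T : Set (WangTile H V)) (X : Set (ℤ × ℤ))
    (f : ℤ × ℤ → WangTile H V) : Prop :=
  (∀ p ∈ X, f p ∈ T) ∧
  (∀ x y : ℤ, (x, y) ∈ X → (x + 1, y) ∈ X →
    (f (x, y)).east = (f (x + 1, y)).west) ∧
  (∀ x y : ℤ, (x, y) ∈ X → (x, y + 1) ∈ X →
    (f (x, y)).north = (f (x, y + 1)).south)

def Tiling {H V : Type*} (T : Set (WangTile H V)) (f : ℤ × ℤ → WangTile H V) : Prop :=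
  TilingOn T Set.univ f

def TilesPlane {H V : Type*} (T : Set (WangTile H V)) : Prop :=
  ∃ f, Tiling T f

def PeriodicTiling {H V : Type*} (f : ℤ × ℤ → WangTile H V) : Prop :=
  ∃ u v : ℤ, (u, v) ≠ (0, 0) ∧ ∀ x y : ℤ, f (x + u, y + v) = f (x, y)

def Aperiodic {H V : Type*} (T : Set (WangTile H V)) : Prop :=
  TilesPlane T ∧ ∀ f, Tiling T f → ¬ PeriodicTiling f

def MinimallyAperiodic {H V : Type*} (T : Set (WangTile H V)) : Prop :=
  Aperiodic T ∧ ∀ S : Set (WangTile H V), S ⊂ T → ¬ TilesPlane S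

/-- The nine tiles `𝒯₀` of the 11-tile Wang set `𝒯`.  Horizontal (west/east) colors in
`Fin 4`, vertical (south/north) colors in `Fin 5`.  Tiles are written
`⟨west, east, south, north⟩`. -/
def T₀ : Set (WangTile (Fin 4) (Fin 5)) :=
  { ⟨0, 0, 1, 0⟩, ⟨0, 3, 2, 1⟩, ⟨1, 0, 2, 2⟩, ⟨1, 1, 4, 2⟩, ⟨1, 3, 2, 3⟩,
    ⟨3, 0, 1, 1⟩, ⟨3, 1, 1, 1⟩, ⟨3, 1, 2, 2⟩, ⟨3, 3, 3, 1⟩ }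

/-- The two tiles `𝒯₁` of the 11-tile Wang set `𝒯`. -/
def T₁ : Set (WangTile (Fin 4) (Fin 5)) := { ⟨2, 2, 1, 4⟩, ⟨2, 2, 0, 2⟩ }

/-- The 11-tile Wang set `𝒯 = 𝒯₀ ∪ 𝒯₁`. -/
def T11 : Set (WangTile (Fin 4) (Fin 5)) := T₀ ∪ T₁

/-- The horizontal strip `ℤ × {0, …, m}`. -/
def strip (m : ℕ) : Set (ℤ × ℤ) := {p : ℤ × ℤ | 0 ≤ p.2 ∧ p.2 ≤ (m : ℤ)}

abbrev JTile := WangTile (Fin 4) (Fin 5)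

def T0L : List JTile := [⟨0,0,1,0⟩, ⟨0,3,2,1⟩, ⟨1,0,2,2⟩, ⟨1,1,4,2⟩, ⟨1,3,2,3⟩, ⟨3,0,1,1⟩, ⟨3,1,1,1⟩, ⟨3,1,2,2⟩, ⟨3,3,3,1⟩]

def T1L : List JTile := [⟨2,2,1,4⟩, ⟨2,2,0,2⟩]

def T11L : List JTile := [⟨0,0,1,0⟩, ⟨0,3,2,1⟩, ⟨1,0,2,2⟩, ⟨1,1,4,2⟩, ⟨1,3,2,3⟩, ⟨3,0,1,1⟩, ⟨3,1,1,1⟩, ⟨3,1,2,2⟩, ⟨3,3,3,1⟩, ⟨2,2,1,4⟩, ⟨2,2,0,2⟩]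

def TAL : List JTile := [⟨0,3,2,1⟩, ⟨1,0,2,2⟩, ⟨1,1,4,2⟩, ⟨1,3,2,3⟩, ⟨3,1,2,2⟩]

def TBL : List JTile := [⟨0,0,1,0⟩, ⟨0,3,2,1⟩, ⟨3,0,1,1⟩, ⟨3,1,1,1⟩, ⟨3,3,3,1⟩]

def TCL : List JTile := [⟨0,3,2,1⟩, ⟨1,0,2,2⟩, ⟨1,3,2,3⟩, ⟨3,0,1,1⟩, ⟨3,1,1,1⟩, ⟨3,1,2,2⟩, ⟨3,3,3,1⟩]

def S2L : List (JTile × JTile) := [(⟨0,3,2,1⟩, ⟨0,0,1,0⟩), (⟨0,3,2,1⟩, ⟨3,0,1,1⟩), (⟨0,3,2,1⟩, ⟨3,1,1,1⟩), (⟨1,0,2,2⟩, ⟨0,3,2,1⟩), (⟨1,1,4,2⟩, ⟨0,3,2,1⟩), (⟨1,3,2,3⟩, ⟨3,3,3,1⟩), (⟨3,1,2,2⟩, ⟨0,3,2,1⟩)]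

def S3L : List (JTile × JTile × JTile) := [(⟨0,3,2,1⟩, ⟨3,0,1,1⟩, ⟨3,0,1,1⟩), (⟨0,3,2,1⟩, ⟨3,0,1,1⟩, ⟨3,1,1,1⟩), (⟨0,3,2,1⟩, ⟨3,1,1,1⟩, ⟨3,0,1,1⟩), (⟨0,3,2,1⟩, ⟨3,1,1,1⟩, ⟨3,1,1,1⟩), (⟨1,0,2,2⟩, ⟨0,3,2,1⟩, ⟨3,0,1,1⟩), (⟨1,0,2,2⟩, ⟨0,3,2,1⟩, ⟨3,1,1,1⟩), (⟨1,0,2,2⟩, ⟨1,0,2,2⟩, ⟨0,3,2,1⟩), (⟨1,0,2,2⟩, ⟨1,0,2,2⟩, ⟨1,0,2,2⟩), (⟨1,0,2,2⟩, ⟨1,0,2,2⟩, ⟨1,3,2,3⟩), (⟨1,0,2,2⟩, ⟨1,0,2,2⟩, ⟨3,1,2,2⟩), (⟨1,0,2,2⟩, ⟨1,3,2,3⟩, ⟨3,3,3,1⟩), (⟨1,0,2,2⟩, ⟨3,1,2,2⟩, ⟨0,3,2,1⟩), (⟨1,0,2,2⟩, ⟨3,1,2,2⟩, ⟨1,0,2,2⟩),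 (⟨1,0,2,2⟩, ⟨3,1,2,2⟩, ⟨1,3,2,3⟩), (⟨1,0,2,2⟩, ⟨3,1,2,2⟩, ⟨3,1,2,2⟩), (⟨1,3,2,3⟩, ⟨3,3,3,1⟩, ⟨3,0,1,1⟩), (⟨1,3,2,3⟩, ⟨3,3,3,1⟩, ⟨3,1,1,1⟩), (⟨3,0,1,1⟩, ⟨3,0,1,1⟩, ⟨3,0,1,1⟩), (⟨3,0,1,1⟩, ⟨3,0,1,1⟩, ⟨3,1,1,1⟩), (⟨3,0,1,1⟩, ⟨3,1,1,1⟩, ⟨3,0,1,1⟩), (⟨3,0,1,1⟩, ⟨3,1,1,1⟩, ⟨3,1,1,1⟩), (⟨3,1,1,1⟩, ⟨3,0,1,1⟩, ⟨3,0,1,1⟩), (⟨3,1,1,1⟩, ⟨3,0,1,1⟩, ⟨3,1,1,1⟩), (⟨3,1,1,1⟩, ⟨3,1,1,1⟩, ⟨3,0,1,1⟩), (⟨3,1,1,1⟩, ⟨3,1,1,1⟩, ⟨3,1,1,1⟩), (⟨3,1,2,2⟩, ⟨0,3,2,1⟩, ⟨3,0,1,1⟩), (⟨3,1,2,2⟩,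 ⟨0,3,2,1⟩, ⟨3,1,1,1⟩), (⟨3,1,2,2⟩, ⟨1,0,2,2⟩, ⟨0,3,2,1⟩), (⟨3,1,2,2⟩, ⟨1,0,2,2⟩, ⟨1,0,2,2⟩), (⟨3,1,2,2⟩, ⟨1,0,2,2⟩, ⟨1,3,2,3⟩), (⟨3,1,2,2⟩, ⟨1,0,2,2⟩, ⟨3,1,2,2⟩), (⟨3,1,2,2⟩, ⟨1,3,2,3⟩, ⟨3,3,3,1⟩), (⟨3,1,2,2⟩, ⟨3,1,2,2⟩, ⟨0,3,2,1⟩), (⟨3,1,2,2⟩, ⟨3,1,2,2⟩, ⟨1,0,2,2⟩), (⟨3,1,2,2⟩, ⟨3,1,2,2⟩, ⟨1,3,2,3⟩), (⟨3,1,2,2⟩, ⟨3,1,2,2⟩, ⟨3,1,2,2⟩), (⟨3,3,3,1⟩, ⟨3,0,1,1⟩, ⟨3,0,1,1⟩), (⟨3,3,3,1⟩, ⟨3,0,1,1⟩, ⟨3,1,1,1⟩), (⟨3,3,3,1⟩, ⟨3,1,1,1⟩, ⟨3,0,1,1⟩), (⟨3,3,3,1⟩, ⟨3,1,1,1⟩,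 ⟨3,1,1,1⟩)]

def rk2 (s : JTile × JTile) : ℕ :=
  if s = (⟨1,0,2,2⟩, ⟨0,3,2,1⟩) then 3 else
  if s = (⟨0,3,2,1⟩, ⟨0,0,1,0⟩) then 2 else
  if s = (⟨0,3,2,1⟩, ⟨3,0,1,1⟩) then 2 else
  if s = (⟨1,1,4,2⟩, ⟨0,3,2,1⟩) then 1 else
  if s = (⟨3,1,2,2⟩, ⟨0,3,2,1⟩) then 1 else
  0

def rk3 (s : JTile × JTile × JTile) : ℕ :=
  if s = (⟨3,1,2,2⟩, ⟨1,3,2,3⟩, ⟨3,3,3,1⟩) then 6 else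
  if s = (⟨1,3,2,3⟩, ⟨3,3,3,1⟩, ⟨3,0,1,1⟩) then 5 else
  if s = (⟨1,3,2,3⟩, ⟨3,3,3,1⟩, ⟨3,1,1,1⟩) then 5 else
  if s = (⟨3,1,2,2⟩, ⟨3,1,2,2⟩, ⟨0,3,2,1⟩) then 4 else
  if s = (⟨3,1,2,2⟩, ⟨3,1,2,2⟩, ⟨1,3,2,3⟩) then 4 else
  if s = (⟨1,0,2,2⟩, ⟨1,3,2,3⟩, ⟨3,3,3,1⟩) then 3 else
  if s = (⟨0,3,2,1⟩, ⟨3,1,1,1⟩, ⟨3,0,1,1⟩) then 2 else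
  if s = (⟨0,3,2,1⟩, ⟨3,1,1,1⟩, ⟨3,1,1,1⟩) then 2 else
  if s = (⟨3,3,3,1⟩, ⟨3,1,1,1⟩, ⟨3,0,1,1⟩) then 2 else
  if s = (⟨3,3,3,1⟩, ⟨3,1,1,1⟩, ⟨3,1,1,1⟩) then 2 else
  if s = (⟨3,1,1,1⟩, ⟨3,1,1,1⟩, ⟨3,0,1,1⟩) then 1 else
  if s = (⟨3,1,1,1⟩, ⟨3,1,1,1⟩, ⟨3,1,1,1⟩) then 1 else
  if s = (⟨3,1,2,2⟩, ⟨0,3,2,1⟩, ⟨3,0,1,1⟩) then 1 else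
  if s = (⟨3,1,2,2⟩, ⟨0,3,2,1⟩, ⟨3,1,1,1⟩) then 1 else
  if s = (⟨3,1,2,2⟩, ⟨1,0,2,2⟩, ⟨0,3,2,1⟩) then 1 else
  if s = (⟨3,1,2,2⟩, ⟨1,0,2,2⟩, ⟨1,3,2,3⟩) then 1 else
  if s = (⟨3,1,2,2⟩, ⟨3,1,2,2⟩, ⟨1,0,2,2⟩) then 1 else
  if s = (⟨3,1,2,2⟩, ⟨3,1,2,2⟩, ⟨3,1,2,2⟩) then 1 else
  0

lemma descent (g : ℕ → ℕ) (h : ∀ n, g (n+1) < g n) : False := by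
  have key : ∀ n, g n + n ≤ g 0 := by
    intro n
    induction n with
    | zero => omega
    | succ n ih => have := h n; omega
  have := key (g 0 + 1); omega

lemma d_split : ∀ t ∈ T11L, t ∈ T0L ∨ t ∈ T1L := by decide
lemma d_T1north : ∀ t ∈ T1L, t.north = 4 ∨ t.north = 2 := by decide
lemma d_T1south : ∀ t ∈ T1L, t.south = 0 ∨ t.south = 1 := by decide
lemma d_T1west : ∀ t ∈ T1L, t.west = 2 := by decide
lemma d_T1east : ∀ t ∈ T1L, t.east = 2 := by decide
lemma d_west2 : ∀ t ∈ T11L, t.west = 2 → t ∈ T1L := by decide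
lemma d_east2 : ∀ t ∈ T11L, t.east = 2 → t ∈ T1L := by decide
lemma d_south0 : ∀ t ∈ T11L, t.south = 0 → t ∈ T1L := by decide
lemma d_north4 : ∀ t ∈ T11L, t.north = 4 → t ∈ T1L := by decide
lemma d_noadj : ∀ s ∈ T1L, ∀ t ∈ T1L, s.north ≠ t.south := by decide
lemma d_TA : ∀ t ∈ T0L, (t.south = 4 ∨ t.south = 2) → t ∈ TAL := by decide
lemma d_TB : ∀ t ∈ T0L, (t.north = 0 ∨ t.north = 1) → t ∈ TBL := by decide
lemma d_TC : ∀ t ∈ T0L, ¬ t.south = 4 → ¬ t.north = 0 → t ∈ TCL := by decide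
lemma d_gap2 : ∀ a ∈ TAL, (a.north = 0 ∨ a.north = 1) → ∀ b ∈ TAL,
    (b.north = 0 ∨ b.north = 1) → a.east ≠ b.west := by decide
lemma d_cls2 : ∀ a ∈ TAL, ∀ b ∈ TBL, a.north = b.south → (a,b) ∈ S2L := by decide
lemma d_dec2 : ∀ s ∈ S2L, ∀ t ∈ S2L, s.1.east = t.1.west → s.2.east = t.2.west →
    rk2 t < rk2 s := by decide
lemma d_cls3 : ∀ a ∈ TCL, ∀ b ∈ TCL, ∀ c ∈ TCL, a.north = b.south → b.north = c.south →
    (a,b,c) ∈ S3L := by decide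
lemma d_dec3 : ∀ s ∈ S3L, ∀ t ∈ S3L, s.1.east = t.1.west → s.2.1.east = t.2.1.west →
    s.2.2.east = t.2.2.west → rk3 t < rk3 s := by decide

lemma mem_T0_iff (t : JTile) : t ∈ T₀ ↔ t ∈ T0L := by
  simp only [T₀, T0L, Set.mem_insert_iff, Set.mem_singleton_iff, List.mem_cons,
    List.not_mem_nil, or_false]
lemma mem_T1_iff (t : JTile) : t ∈ T₁ ↔ t ∈ T1L := by
  simp only [T₁, T1L, Set.mem_insert_iff, Set.mem_singleton_iff, List.mem_cons,
    List.not_mem_nil, or_false]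
lemma mem_T11_iff (t : JTile) : t ∈ T11 ↔ t ∈ T11L := by
  simp only [T11, Set.mem_union, mem_T0_iff, mem_T1_iff, T0L, T1L, T11L, List.mem_cons,
    List.not_mem_nil, or_false]
  tauto

def nxtF (w : ℤ → Fin 2) (z : ℤ) : ℤ := if w (z+4) = 1 then z+4 else z+5
def prvF (w : ℤ → Fin 2) (z : ℤ) : ℤ := if w (z-4) = 1 then z-4 else z-5
def pF (w : ℤ → Fin 2) (y₀ : ℤ) (k : ℤ) : ℤ :=
  if 0 ≤ k then (nxtF w)^[k.toNat] y₀ else (prvF w)^[(-k).toNat] y₀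

/-- in any tiling of the plane by the 11-tile set `𝒯 = 𝒯₀ ∪ 𝒯₁`, each
row uses tiles of only one of `𝒯₀`, `𝒯₁`; and the row labelling `v : ℤ → {0,1}`
(`v y = 1` iff row `y` uses tiles of `𝒯₁`) is a biinfinite concatenation of the blocks
`1000` and `10000`: there is a strictly increasing sequence `(p k)` of integers tending
to `±∞` with consecutive gaps in `{4,5}`, `v (p k) = 1`, and `v = 0` strictly between
consecutive `p k`'s. -/
theorem T11_rows_structure (f : ℤ × ℤ → WangTile (Fin 4) (Fin 5))
    (hf : Tiling T11 f) :
    (∀ y : ℤ, (∀ x : ℤ, f (x, y) ∈ T₀) ∨ (∀ x : ℤ, f (x, y) ∈ T₁)) ∧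
    ∀ v : ℤ → Fin 2, (∀ y : ℤ, v y = 1 ↔ ∃ x : ℤ, f (x, y) ∈ T₁) →
      ∃ p : ℤ → ℤ, StrictMono p ∧
        Filter.Tendsto p Filter.atTop Filter.atTop ∧
        Filter.Tendsto p Filter.atBot Filter.atBot ∧
        ∀ k : ℤ, (p (k + 1) - p k = 4 ∨ p (k + 1) - p k = 5) ∧
          v (p k) = 1 ∧ ∀ y : ℤ, p k < y → y < p (k + 1) → v y = 0 := by
  obtain ⟨hmem, hh, hvv⟩ := hf
  have hm : ∀ x y : ℤ, f (x, y) ∈ T11L :=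
    fun x y => (mem_T11_iff _).mp (hmem (x, y) (Set.mem_univ _))
  have hh' : ∀ x y : ℤ, (f (x, y)).east = (f (x + 1, y)).west :=
    fun x y => hh x y trivial trivial
  have hn' : ∀ x y : ℤ, (f (x, y)).north = (f (x, y + 1)).south :=
    fun x y => hvv x y trivial trivial
  have step1 : ∀ z y : ℤ, f (z, y) ∈ T1L → f (z + 1, y) ∈ T1L := by
    intro z y hz
    refine d_west2 _ (hm _ _) ?_
    rw [← hh' z y]
    exact d_T1east _ hz
  have step2 : ∀ z y : ℤ, f (z, y) ∈ T1L → f (z - 1, y) ∈ T1L := by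
    intro z y hz
    refine d_east2 _ (hm _ _) ?_
    have h2 := hh' (z - 1) y
    rw [show z - 1 + 1 = z by ring] at h2
    rw [h2]
    exact d_T1west _ hz
  have rowAll : ∀ x y : ℤ, f (x, y) ∈ T1L → ∀ x', f (x', y) ∈ T1L := by
    intro x y hx x'
    have key : ∀ d : ℤ, f (x + d, y) ∈ T1L := by
      intro d
      induction d using Int.induction_on with
      | zero => simpa using hx
      | succ n ih =>
        rw [show x + ((n : ℤ) + 1) = (x + n) + 1 by ring]
        exact step1 _ _ ih
      | pred n ih =>
        rw [show x + (-(n : ℤ) - 1) = (x + -(n : ℤ)) - 1 by ring]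
        exact step2 _ _ ih
    have := key (x' - x)
    rwa [show x + (x' - x) = x' by ring] at this
  constructor
  · intro y
    by_cases hex : ∃ x, f (x, y) ∈ T1L
    · right
      obtain ⟨x, hx⟩ := hex
      intro x'
      exact (mem_T1_iff _).mpr (rowAll x y hx x')
    · left
      intro x
      rcases d_split _ (hm x y) with h | h
      · exact (mem_T0_iff _).mpr h
      · exact absurd ⟨x, h⟩ hex
  intro w hw
  have hwl : ∀ y : ℤ, w y = 1 ↔ ∃ x : ℤ, f (x, y) ∈ T1L := by
    intro y
    rw [hw y]
    exact exists_congr fun x => mem_T1_iff _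
  have fin2 : ∀ a : Fin 2, a = 0 ∨ a = 1 := by decide
  have ne01 : (0 : Fin 2) ≠ 1 := by decide
  have wall1 : ∀ y : ℤ, w y = 1 → ∀ x, f (x, y) ∈ T1L := by
    intro y hy x
    obtain ⟨x₀, hx₀⟩ := (hwl y).mp hy
    exact rowAll x₀ y hx₀ x
  have wall0 : ∀ y : ℤ, w y = 0 → ∀ x, f (x, y) ∈ T0L := by
    intro y hy x
    rcases d_split _ (hm x y) with h | h
    · exact h
    · have h1 := (hwl y).mpr ⟨x, h⟩
      rw [hy] at h1
      exact absurd h1 ne01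
  have force_s0 : ∀ x y : ℤ, (f (x, y)).south = 0 → w y = 1 :=
    fun x y h => (hwl y).mpr ⟨x, d_south0 _ (hm x y) h⟩
  have force_n4 : ∀ x y : ℤ, (f (x, y)).north = 4 → w y = 1 :=
    fun x y h => (hwl y).mpr ⟨x, d_north4 _ (hm x y) h⟩
  have G1 : ∀ y : ℤ, w y = 1 → w (y + 1) = 0 := by
    intro y hy
    rcases fin2 (w (y + 1)) with h | h
    · exact h
    exact absurd (hn' 0 y) (d_noadj _ (wall1 y hy 0) _ (wall1 _ h 0))
  have memTA : ∀ y : ℤ, w y = 1 → w (y + 1) = 0 → ∀ x, f (x, y + 1) ∈ TAL := by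
    intro y hy hy1 x
    refine d_TA _ (wall0 _ hy1 x) ?_
    have h := hn' x y
    rcases d_T1north _ (wall1 y hy x) with h4 | h2
    · left; rw [← h]; exact h4
    · right; rw [← h]; exact h2
  have G2 : ∀ y : ℤ, w y = 1 → w (y + 2) = 0 := by
    intro y hy
    rcases fin2 (w (y + 2)) with h | h
    · exact h
    exfalso
    have hy1 := G1 y hy
    have hna : ∀ x : ℤ, (f (x, y + 1)).north = 0 ∨ (f (x, y + 1)).north = 1 := by
      intro x
      have hq := hn' x (y + 1)
      rw [show y + 1 + 1 = y + 2 by ring] at hq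
      rcases d_T1south _ (wall1 _ h x) with h0 | h1
      · left; rw [hq]; exact h0
      · right; rw [hq]; exact h1
    exact d_gap2 _ (memTA y hy hy1 0) (hna 0) _ (memTA y hy hy1 1) (hna 1) (hh' 0 (y + 1))
  have G3 : ∀ y : ℤ, w y = 1 → w (y + 3) = 0 := by
    intro y hy
    rcases fin2 (w (y + 3)) with h | h
    · exact h
    exfalso
    have hy1 := G1 y hy
    have hy2 := G2 y hy
    have ha : ∀ x : ℤ, f (x, y + 1) ∈ TAL := memTA y hy hy1
    have hb : ∀ x : ℤ, f (x, y + 2) ∈ TBL := by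
      intro x
      refine d_TB _ (wall0 _ hy2 x) ?_
      have hq := hn' x (y + 2)
      rw [show y + 2 + 1 = y + 3 by ring] at hq
      rcases d_T1south _ (wall1 _ h x) with h0 | h1
      · left; rw [hq]; exact h0
      · right; rw [hq]; exact h1
    have hs : ∀ x : ℤ, (f (x, y + 1), f (x, y + 2)) ∈ S2L := by
      intro x
      refine d_cls2 _ (ha x) _ (hb x) ?_
      have hq := hn' x (y + 1)
      rwa [show y + 1 + 1 = y + 2 by ring] at hq
    refine descent (fun n => rk2 (f ((n : ℤ), y + 1), f ((n : ℤ), y + 2))) ?_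
    intro n
    have hd := d_dec2 _ (hs (n : ℤ)) _ (hs ((n : ℤ) + 1)) (hh' (n : ℤ) (y + 1)) (hh' (n : ℤ) (y + 2))
    simp only [Nat.cast_add, Nat.cast_one]
    exact hd
  have L5 : ∀ y : ℤ, w y = 0 → w (y + 1) = 0 → w (y + 2) = 0 → w (y + 3) = 0 →
      w (y + 4) = 0 → False := by
    intro y h0 h1 h2 h3 h4
    have mkTC : ∀ x j : ℤ, w (j - 1) = 0 → w j = 0 → w (j + 1) = 0 → f (x, j) ∈ TCL := by
      intro x j hjm hj hjp
      refine d_TC _ (wall0 _ hj x) ?_ ?_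
      · intro hs4
        have hq := hn' x (j - 1)
        rw [show j - 1 + 1 = j by ring] at hq
        have h1' : w (j - 1) = 1 := force_n4 x (j - 1) (by rw [hq]; exact hs4)
        rw [hjm] at h1'
        exact ne01 h1'
      · intro hn0
        have hq := hn' x j
        have h1' : w (j + 1) = 1 := force_s0 x (j + 1) (by rw [← hq]; exact hn0)
        rw [hjp] at h1'
        exact ne01 h1'
    have hA : ∀ x : ℤ, f (x, y + 1) ∈ TCL := fun x =>
      mkTC x (y + 1) (by rw [show y + 1 - 1 = y by ring]; exact h0) h1
        (by rw [show y + 1 + 1 = y + 2 by ring]; exact h2)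
    have hB : ∀ x : ℤ, f (x, y + 2) ∈ TCL := fun x =>
      mkTC x (y + 2) (by rw [show y + 2 - 1 = y + 1 by ring]; exact h1) h2
        (by rw [show y + 2 + 1 = y + 3 by ring]; exact h3)
    have hC : ∀ x : ℤ, f (x, y + 3) ∈ TCL := fun x =>
      mkTC x (y + 3) (by rw [show y + 3 - 1 = y + 2 by ring]; exact h2) h3
        (by rw [show y + 3 + 1 = y + 4 by ring]; exact h4)
    have hS : ∀ x : ℤ, (f (x, y + 1), f (x, y + 2), f (x, y + 3)) ∈ S3L := by
      intro x
      refine d_cls3 _ (hA x) _ (hB x) _ (hC x) ?_ ?_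
      · have hq := hn' x (y + 1); rwa [show y + 1 + 1 = y + 2 by ring] at hq
      · have hq := hn' x (y + 2); rwa [show y + 2 + 1 = y + 3 by ring] at hq
    refine descent (fun n => rk3 (f ((n : ℤ), y + 1), f ((n : ℤ), y + 2), f ((n : ℤ), y + 3))) ?_
    intro n
    have hd := d_dec3 _ (hS (n : ℤ)) _ (hS ((n : ℤ) + 1)) (hh' (n : ℤ) (y + 1))
      (hh' (n : ℤ) (y + 2)) (hh' (n : ℤ) (y + 3))
    simp only [Nat.cast_add, Nat.cast_one]
    exact hd
  have E1 : ∀ y : ℤ, w y = 1 ∨ w (y + 1) = 1 ∨ w (y + 2) = 1 ∨ w (y + 3) = 1 ∨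
      w (y + 4) = 1 := by
    intro y
    by_contra hcon
    push_neg at hcon
    obtain ⟨c0, c1, c2, c3, c4⟩ := hcon
    have z : ∀ a : Fin 2, a ≠ 1 → a = 0 := by decide
    exact L5 y (z _ c0) (z _ c1) (z _ c2) (z _ c3) (z _ c4)
  have hA4 : ∀ z : ℤ, w z = 1 → w (z + 4) = 1 ∨ w (z + 5) = 1 := by
    intro z hz
    rcases E1 (z + 1) with h | h | h | h | h
    · rw [G1 z hz] at h; exact absurd h ne01
    · rw [show z + 1 + 1 = z + 2 by ring, G2 z hz] at h; exact absurd h ne01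
    · rw [show z + 1 + 2 = z + 3 by ring, G3 z hz] at h; exact absurd h ne01
    · rw [show z + 1 + 3 = z + 4 by ring] at h; exact Or.inl h
    · rw [show z + 1 + 4 = z + 5 by ring] at h; exact Or.inr h
  have hB4 : ∀ z : ℤ, w z = 1 → w (z - 4) = 1 ∨ (w (z - 5) = 1 ∧ w (z - 4) = 0) := by
    intro z hz
    rcases fin2 (w (z - 4)) with h4 | h4
    · right
      refine ⟨?_, h4⟩
      rcases E1 (z - 5) with h | h | h | h | h
      · exact h
      · rw [show z - 5 + 1 = z - 4 by ring, h4] at h; exact absurd h ne01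
      · exfalso
        rw [show z - 5 + 2 = z - 3 by ring] at h
        have hq := G3 _ h
        rw [show z - 3 + 3 = z by ring, hz] at hq
        exact ne01 hq.symm
      · exfalso
        rw [show z - 5 + 3 = z - 2 by ring] at h
        have hq := G2 _ h
        rw [show z - 2 + 2 = z by ring, hz] at hq
        exact ne01 hq.symm
      · exfalso
        rw [show z - 5 + 4 = z - 1 by ring] at h
        have hq := G1 _ h
        rw [show z - 1 + 1 = z by ring, hz] at hq
        exact ne01 hq.symm
    · exact Or.inl h4
  obtain ⟨y₀, hy₀⟩ : ∃ z : ℤ, w z = 1 := by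
    rcases E1 0 with h | h | h | h | h
    exacts [⟨0, h⟩, ⟨0 + 1, h⟩, ⟨0 + 2, h⟩, ⟨0 + 3, h⟩, ⟨0 + 4, h⟩]
  have hstep : ∀ z : ℤ, w z = 1 → (nxtF w z - z = 4 ∨ nxtF w z - z = 5) ∧ w (nxtF w z) = 1 ∧
      ∀ u : ℤ, z < u → u < nxtF w z → w u = 0 := by
    intro z hz
    by_cases h4 : w (z + 4) = 1
    · have e : nxtF w z = z + 4 := by simp only [nxtF, if_pos h4]
      rw [e]
      refine ⟨Or.inl (by ring), h4, ?_⟩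
      intro u hu1 hu2
      have : u = z + 1 ∨ u = z + 2 ∨ u = z + 3 := by omega
      rcases this with rfl | rfl | rfl
      · exact G1 z hz
      · exact G2 z hz
      · exact G3 z hz
    · have h5 : w (z + 5) = 1 := by
        rcases hA4 z hz with h | h
        · exact absurd h h4
        · exact h
      have h40 : w (z + 4) = 0 := by
        rcases fin2 (w (z + 4)) with h | h
        · exact h
        · exact absurd h h4
      have e : nxtF w z = z + 5 := by simp only [nxtF, if_neg h4]
      rw [e]
      refine ⟨Or.inr (by ring), h5, ?_⟩
      intro u hu1 hu2
      have : u = z + 1 ∨ u = z + 2 ∨ u = z + 3 ∨ u = z + 4 := by omega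
      rcases this with rfl | rfl | rfl | rfl
      · exact G1 z hz
      · exact G2 z hz
      · exact G3 z hz
      · exact h40
  have hprv : ∀ z : ℤ, w z = 1 → prvF w z < z ∧ w (prvF w z) = 1 ∧ nxtF w (prvF w z) = z := by
    intro z hz
    rcases hB4 z hz with h | ⟨h5, h40⟩
    · have e : prvF w z = z - 4 := by simp only [prvF, if_pos h]
      rw [e]
      refine ⟨by omega, h, ?_⟩
      have hc : w (z - 4 + 4) = 1 := by rw [show z - 4 + 4 = z by ring]; exact hz
      have e2 : nxtF w (z - 4) = z - 4 + 4 := by simp only [nxtF, if_pos hc]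
      rw [e2]; ring
    · have hne : ¬ w (z - 4) = 1 := by rw [h40]; exact ne01
      have e : prvF w z = z - 5 := by simp only [prvF, if_neg hne]
      rw [e]
      refine ⟨by omega, h5, ?_⟩
      have hne2 : ¬ w (z - 5 + 4) = 1 := by
        rw [show z - 5 + 4 = z - 1 by ring]
        intro hcon
        have hq := G1 _ hcon
        rw [show z - 1 + 1 = z by ring, hz] at hq
        exact ne01 hq.symm
      have e2 : nxtF w (z - 5) = z - 5 + 5 := by simp only [nxtF, if_neg hne2]
      rw [e2]; ring
  have hP1 : ∀ n : ℕ, w ((nxtF w)^[n] y₀) = 1 := by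
    intro n
    induction n with
    | zero => simpa using hy₀
    | succ n ih =>
      rw [Function.iterate_succ_apply']
      exact (hstep _ ih).2.1
  have hN1 : ∀ n : ℕ, w ((prvF w)^[n] y₀) = 1 := by
    intro n
    induction n with
    | zero => simpa using hy₀
    | succ n ih =>
      rw [Function.iterate_succ_apply']
      exact (hprv _ ih).2.1
  have hSk : ∀ k : ℤ, (pF w y₀ (k + 1) - pF w y₀ k = 4 ∨ pF w y₀ (k + 1) - pF w y₀ k = 5) ∧
      w (pF w y₀ k) = 1 ∧ ∀ u : ℤ, pF w y₀ k < u → u < pF w y₀ (k + 1) → w u = 0 := by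
    intro k
    by_cases hk : 0 ≤ k
    · have e1 : pF w y₀ k = (nxtF w)^[k.toNat] y₀ := by simp only [pF, if_pos hk]
      have e2 : pF w y₀ (k + 1) = nxtF w ((nxtF w)^[k.toNat] y₀) := by
        simp only [pF, if_pos (by omega : (0 : ℤ) ≤ k + 1)]
        rw [show (k + 1).toNat = k.toNat + 1 by omega, Function.iterate_succ_apply']
      rw [e1, e2]
      have hst := hstep _ (hP1 k.toNat)
      exact ⟨hst.1, hP1 k.toNat, hst.2.2⟩
    · push_neg at hk
      obtain ⟨n, hn⟩ : ∃ n : ℕ, (-k).toNat = n + 1 := ⟨(-k).toNat - 1, by omega⟩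
      have e1 : pF w y₀ k = prvF w ((prvF w)^[n] y₀) := by
        simp only [pF, if_neg (by omega : ¬ (0 : ℤ) ≤ k)]
        rw [hn, Function.iterate_succ_apply']
      have e2 : pF w y₀ (k + 1) = (prvF w)^[n] y₀ := by
        by_cases hk1 : 0 ≤ k + 1
        · have hk2 : k = -1 := by omega
          subst hk2
          have hn0 : n = 0 := by omega
          subst hn0
          simp [pF]
        · simp only [pF, if_neg hk1]
          rw [show (-(k + 1)).toNat = n by omega]
      rw [e1, e2]
      have hz := hN1 n
      obtain ⟨hlt, hw1, hnxt⟩ := hprv _ hz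
      have hst := hstep _ hw1
      rw [hnxt] at hst
      exact ⟨hst.1, hw1, hst.2.2⟩
  have hmono : StrictMono (pF w y₀) := by
    apply strictMono_int_of_lt_succ
    intro k
    rcases (hSk k).1 with h | h <;> omega
  have hup : ∀ n : ℕ, pF w y₀ 0 + 4 * (n : ℤ) ≤ pF w y₀ (n : ℤ) := by
    intro n
    induction n with
    | zero => simp
    | succ n ih =>
      have h := (hSk (n : ℤ)).1
      have hc : ((n + 1 : ℕ) : ℤ) = (n : ℤ) + 1 := by push_cast; ring
      rw [hc]
      rcases h with h | h <;> omega
  have hdown : ∀ n : ℕ, pF w y₀ (-(n : ℤ)) ≤ pF w y₀ 0 - 4 * (n : ℤ) := by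
    intro n
    induction n with
    | zero => simp
    | succ n ih =>
      have h := (hSk (-(n : ℤ) - 1)).1
      rw [show -(n : ℤ) - 1 + 1 = -(n : ℤ) by ring] at h
      have hc : ((n + 1 : ℕ) : ℤ) = (n : ℤ) + 1 := by push_cast; ring
      rw [hc, show -((n : ℤ) + 1) = -(n : ℤ) - 1 by ring]
      rcases h with h | h <;> omega
  refine ⟨pF w y₀, hmono, ?_, ?_, hSk⟩
  · refine Filter.tendsto_atTop_atTop.mpr fun b => ⟨max 0 (b - pF w y₀ 0), fun a ha => ?_⟩
    have ha0 : 0 ≤ a := le_trans (le_max_left _ _) ha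
    have hab : b - pF w y₀ 0 ≤ a := le_trans (le_max_right _ _) ha
    have h := hup a.toNat
    rw [show ((a.toNat : ℕ) : ℤ) = a by omega] at h
    omega
  · refine Filter.tendsto_atBot_atBot.mpr fun b => ⟨min 0 (b - pF w y₀ 0), fun a ha => ?_⟩
    have ha0 : a ≤ 0 := le_trans ha (min_le_left _ _)
    have hab : a ≤ b - pF w y₀ 0 := le_trans ha (min_le_right _ _)
    have h := hdown (-a).toNat
    rw [show (((-a).toNat : ℕ) : ℤ) = -a by omega, neg_neg] at h
    omega
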